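/- Let n ≥ 2 and 1 ≤ k ≤ n−1. Let K ⊆ ℝⁿ be a convex body with K ⊆ Bⁿ such that there exists a John decomposition u¹,…,uᵐ, λ₁,…,λₘ with every uᵢ ∈ K (i.e., Bⁿ is the Loewner ellipsoid of K). Let v¹,…,vᵏ ∈ ℝⁿ be orthonormal, let F be their linear span, let c ∈ F and α₁,…,α_k > 0, and let E be the k-ellipsoid with axis directions v¹,…,vᵏ, center c and semi-axes α₁,…,α_k. If the orthogonal projection of K onto F is contained in E, then ∏ⱼ αⱼ ≥ (k/n)^{k/2} (equivalently vol_k(E) ≥ vol_k(√(k/n)·Bᵏ)), with equality if and only if c = 0 and αⱼ = √(k/n) for every j ∈ {1,…,k} (i.e., E = √(k/n)·(Bⁿ ∩ F), the √(k/n)-dilate of the projection of Bⁿ onto F). -/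

import Mathlib

open scoped InnerProductSpace BigOperators

lemma amgm_aux {k : ℕ} (hk : 0 < k) (b : Fin k → ℝ) (hb : ∀ j, 0 < b j) {S : ℝ} (hS : 0 < S)
    (hsum : ∑ j, b j ≤ (k : ℝ) * S) :
    ∏ j, b j ≤ S ^ k ∧ (∏ j, b j = S ^ k → (∀ j, b j = S) ∧ ∑ j, b j = (k : ℝ) * S) := by
  have hk0 : (0:ℝ) < k := by exact_mod_cast hk
  set w : Fin k → ℝ := fun _ => (k:ℝ)⁻¹ with hw_def
  have hw1 : ∑ j : Fin k, w j = 1 := by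
    simp [hw_def, Finset.card_fin]
    field_simp
  have hmem : ∀ j ∈ Finset.univ, b j ∈ Set.Ioi (0:ℝ) := fun j _ => hb j
  have h0 : ∀ j ∈ Finset.univ, (0:ℝ) ≤ w j := fun j _ => by positivity
  have h0' : ∀ j ∈ Finset.univ, (0:ℝ) < w j := fun j _ => by positivity
  have h1 : ∑ j, w j • Real.log (b j) ≤ Real.log (∑ j, w j • b j) :=
    strictConcaveOn_log_Ioi.concaveOn.le_map_sum h0 hw1 hmem
  have havg : ∑ j, w j • b j = (k:ℝ)⁻¹ * ∑ j, b j := by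
    simp [hw_def, Finset.mul_sum]
  have hne : Nonempty (Fin k) := ⟨⟨0, hk⟩⟩
  have havg_pos : 0 < ∑ j, w j • b j := by
    rw [havg]
    exact mul_pos (inv_pos.mpr hk0) (Finset.sum_pos (fun j _ => hb j) Finset.univ_nonempty)
  have havg_le : ∑ j, w j • b j ≤ S := by
    rw [havg]
    rw [inv_mul_le_iff₀ hk0]
    linarith
  have h2 : Real.log (∑ j, w j • b j) ≤ Real.log S := Real.log_le_log havg_pos havg_le
  have h3 : ∑ j, w j • Real.log (b j) = (k:ℝ)⁻¹ * ∑ j, Real.log (b j) := by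
    simp [hw_def, Finset.mul_sum]
  have hlogsum : ∑ j, Real.log (b j) ≤ (k:ℝ) * Real.log S := by
    have := h1.trans h2
    rw [h3] at this
    rw [inv_mul_le_iff₀ hk0] at this
    linarith
  have hprodlog : Real.log (∏ j, b j) = ∑ j, Real.log (b j) := by
    rw [Real.log_prod]
    intro j _; exact (hb j).ne'
  have hprod_pos : 0 < ∏ j, b j := Finset.prod_pos fun j _ => hb j
  have hineq : ∏ j, b j ≤ S ^ k := by
    have : Real.log (∏ j, b j) ≤ Real.log (S ^ k) := by
      rw [hprodlog, Real.log_pow]; exact_mod_cast hlogsum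
    have := Real.exp_le_exp.mpr this
    rwa [Real.exp_log hprod_pos, Real.exp_log (by positivity)] at this
  refine ⟨hineq, fun heq => ?_⟩
  have hls : ∑ j, Real.log (b j) = (k:ℝ) * Real.log S := by
    have := congrArg Real.log heq
    rwa [hprodlog, Real.log_pow] at this
  have hwl : ∑ j, w j • Real.log (b j) = Real.log S := by
    rw [h3, hls]; field_simp
  -- equality in Jensen
  have hje : Real.log (∑ j, w j • b j) ≤ ∑ j, w j • Real.log (b j) := by
    rw [hwl]; exact h2
  have hallvals := strictConcaveOn_log_Ioi.eq_of_map_sum_eq h0' hw1 hmem hje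
  have j0 : Fin k := ⟨0, hk⟩
  have hall : ∀ j, b j = b j0 := fun j =>
    hallvals (Finset.mem_univ j) (Finset.mem_univ j0)
  have hbp : ∏ j, b j = (b j0) ^ k := by
    rw [Finset.prod_congr rfl fun j _ => hall j]
    simp [Finset.card_fin]
  have hb0 : b j0 = S := by
    by_contra hne
    rcases lt_or_gt_of_ne hne with h | h
    · have : (b j0) ^ k < S ^ k := pow_lt_pow_left₀ h (hb j0).le (by omega)
      rw [← hbp, heq] at this; exact lt_irrefl _ this
    · have : S ^ k < (b j0) ^ k := pow_lt_pow_left₀ h hS.le (by omega)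
      rw [← hbp, heq] at this; exact lt_irrefl _ this
  have hje' : ∀ j, b j = S := fun j => (hall j).trans hb0
  constructor
  · exact hje'
  · rw [Finset.sum_congr rfl fun j _ => hje' j]
    simp [Finset.card_fin, mul_comm]

/-- minimal-volume lower bound for ellipsoids containing the projection
of a convex body whose Loewner ellipsoid is the unit ball, with equality case. -/
theorem stmt0 (n k : ℕ) (hn : 2 ≤ n) (hk : 1 ≤ k) (hkn : k ≤ n - 1)
    (K : Set (EuclideanSpace ℝ (Fin n)))
    (hKcompact : IsCompact K) (hKconv : Convex ℝ K) (hKint : (interior K).Nonempty)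
    (hKB : K ⊆ Metric.closedBall 0 1)
    (m : ℕ) (u : Fin m → EuclideanSpace ℝ (Fin n)) (lam : Fin m → ℝ)
    (hu : ∀ i, ‖u i‖ = 1) (hlam : ∀ i, 0 < lam i)
    (huK : ∀ i, u i ∈ K)
    (hsum : ∑ i, lam i • u i = 0)
    (hdecomp : ∀ x : EuclideanSpace ℝ (Fin n), ∑ i, (lam i * ⟪u i, x⟫_ℝ) • u i = x)
    (v : Fin k → EuclideanSpace ℝ (Fin n)) (hv : Orthonormal ℝ v)
    (c : EuclideanSpace ℝ (Fin n)) (hc : c ∈ Submodule.span ℝ (Set.range v))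
    (α : Fin k → ℝ) (hα : ∀ j, 0 < α j)
    (Eell : Set (EuclideanSpace ℝ (Fin n)))
    (hEell : Eell = {x | ∃ t : Fin k → ℝ,
      ∑ j, (t j) ^ 2 / (α j) ^ 2 ≤ 1 ∧ x = c + ∑ j, t j • v j})
    (hproj : ∀ x ∈ K, (∑ j, ⟪v j, x⟫_ℝ • v j) ∈ Eell) :
    Real.sqrt ((k : ℝ) / n) ^ k ≤ ∏ j, α j ∧
      ((∏ j, α j = Real.sqrt ((k : ℝ) / n) ^ k) ↔
        (c = 0 ∧ ∀ j, α j = Real.sqrt ((k : ℝ) / n))) := by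
  classical
  have hk' : 0 < k := hk
  have hn' : 0 < n := by omega
  have hk0 : (0:ℝ) < k := by exact_mod_cast hk'
  have hn0 : (0:ℝ) < n := by exact_mod_cast hn'
  -- key bilinear identity
  have key : ∀ x y : EuclideanSpace ℝ (Fin n),
      ∑ i, lam i * (⟪u i, x⟫_ℝ * ⟪u i, y⟫_ℝ) = ⟪x, y⟫_ℝ := by
    intro x y
    have h : ⟪∑ i, (lam i * ⟪u i, x⟫_ℝ) • u i, y⟫_ℝ = ⟪x, y⟫_ℝ := by rw [hdecomp x]
    rw [sum_inner] at h
    simp only [real_inner_smul_left, mul_assoc] at h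
    exact h
  -- trace identity
  have htrace : ∑ i, lam i = (n:ℝ) := by
    have h1 : ∀ i, ∑ l, u i l * u i l = 1 := by
      intro i
      have h : ⟪u i, u i⟫_ℝ = 1 := by
        rw [real_inner_self_eq_norm_sq, hu i]; norm_num
      simp only [PiLp.inner_apply, RCLike.inner_apply, conj_trivial] at h
      exact h
    have h2 : ∑ i, lam i = ∑ i, lam i * ∑ l, u i l * u i l := by
      simp [h1]
    rw [h2]
    have h3 : ∑ i, lam i * ∑ l, u i l * u i l
        = ∑ l, ∑ i, lam i * (u i l * u i l) := by
      simp_rw [Finset.mul_sum]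
      rw [Finset.sum_comm]
    rw [h3]
    have h4 : ∀ l : Fin n, ∑ i, lam i * (u i l * u i l) = 1 := by
      intro l
      have h := key (EuclideanSpace.single l 1) (EuclideanSpace.single l 1)
      simp only [EuclideanSpace.inner_single_right, starRingEnd_apply, star_trivial,
        one_mul, mul_one, EuclideanSpace.single_apply, if_pos rfl] at h
      exact h
    simp [h4]
  set a : Fin m → Fin k → ℝ := fun i j => ⟪v j, u i⟫_ℝ with ha_def
  set d : Fin k → ℝ := fun j => ⟪v j, c⟫_ℝ with hd_def
  have hvnorm : ∀ j, ⟪v j, v j⟫_ℝ = 1 := by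
    intro j
    rw [real_inner_self_eq_norm_sq, hv.1 j]; norm_num
  -- second moment
  have hsumsq : ∀ j, ∑ i, lam i * (a i j)^2 = 1 := by
    intro j
    have h := key (v j) (v j)
    rw [hvnorm j] at h
    rw [← h]
    refine Finset.sum_congr rfl fun i _ => ?_
    simp only [ha_def]
    rw [real_inner_comm, sq]
  -- first moment
  have hsumlin : ∀ j, ∑ i, lam i * a i j = 0 := by
    intro j
    have h : ⟪v j, ∑ i, lam i • u i⟫_ℝ = 0 := by rw [hsum]; exact inner_zero_right _
    rw [inner_sum] at h
    simp only [real_inner_smul_right] at h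
    exact h
  -- per-point ellipsoid constraint
  have htc : ∀ i, ∑ j, (a i j - d j)^2 / (α j)^2 ≤ 1 := by
    intro i
    have hmem := hproj (u i) (huK i)
    rw [hEell] at hmem
    obtain ⟨t, ht1, ht2⟩ := hmem
    have hts : ∀ j, t j = a i j - d j := by
      intro j
      have h := congrArg (fun z => ⟪v j, z⟫_ℝ) ht2
      simp only [inner_add_right] at h
      rw [hv.inner_right_fintype, hv.inner_right_fintype] at h
      simp only [ha_def, hd_def]
      linarith
    calc ∑ j, (a i j - d j)^2 / (α j)^2 = ∑ j, (t j)^2 / (α j)^2 := by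
          refine Finset.sum_congr rfl fun j _ => ?_
          rw [hts j]
      _ ≤ 1 := ht1
  -- main averaged inequality
  have hA : ∀ j, ∑ i, lam i * (a i j - d j)^2 = 1 + (n:ℝ) * (d j)^2 := by
    intro j
    have expand : ∀ i, lam i * (a i j - d j)^2
        = lam i * (a i j)^2 - 2 * d j * (lam i * a i j) + (d j)^2 * lam i := by
      intro i; ring
    rw [Finset.sum_congr rfl fun i _ => expand i]
    rw [Finset.sum_add_distrib, Finset.sum_sub_distrib, ← Finset.mul_sum, ← Finset.mul_sum]
    rw [hsumsq j, hsumlin j, htrace]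
    ring
  have hmain : ∑ j, (1 + (n:ℝ) * (d j)^2) / (α j)^2 ≤ (n:ℝ) := by
    have hswap : ∑ i, lam i * (∑ j, (a i j - d j)^2 / (α j)^2)
        = ∑ j, (1 + (n:ℝ) * (d j)^2) / (α j)^2 := by
      simp_rw [Finset.mul_sum]
      rw [Finset.sum_comm]
      refine Finset.sum_congr rfl fun j _ => ?_
      rw [← hA j, Finset.sum_div]
      refine Finset.sum_congr rfl fun i _ => ?_
      rw [mul_div_assoc]
    calc ∑ j, (1 + (n:ℝ) * (d j)^2) / (α j)^2
        = ∑ i, lam i * (∑ j, (a i j - d j)^2 / (α j)^2) := hswap.symm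
      _ ≤ ∑ i, lam i * 1 := Finset.sum_le_sum fun i _ =>
          mul_le_mul_of_nonneg_left (htc i) (hlam i).le
      _ = (n:ℝ) := by rw [← htrace]; simp
  -- separate terms
  set b : Fin k → ℝ := fun j => 1 / (α j)^2 with hb_def
  have hb : ∀ j, 0 < b j := fun j => by
    have := hα j; simp only [hb_def]; positivity
  have hsplit : ∑ j, b j + (n:ℝ) * ∑ j, (d j)^2 / (α j)^2 ≤ (n:ℝ) := by
    have : ∀ j, (1 + (n:ℝ) * (d j)^2) / (α j)^2
        = b j + (n:ℝ) * ((d j)^2 / (α j)^2) := by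
      intro j
      have := (hα j).ne'
      field_simp [hb_def]
      simp only [hb_def]
      rw [mul_one_div_cancel (pow_ne_zero 2 this)]
    rw [Finset.sum_congr rfl fun j _ => this j, Finset.sum_add_distrib,
      ← Finset.mul_sum] at hmain
    exact hmain
  have hd2 : 0 ≤ ∑ j, (d j)^2 / (α j)^2 := by positivity
  have hbsum : ∑ j, b j ≤ (k:ℝ) * ((n:ℝ)/k) := by
    have : (k:ℝ) * ((n:ℝ)/k) = n := by field_simp
    rw [this]
    nlinarith [hd2]
  obtain ⟨hineq, heqc⟩ := amgm_aux hk' b hb (div_pos hn0 hk0) hbsum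
  have hP : 0 < ∏ j, α j := Finset.prod_pos fun j _ => hα j
  have hprodb : ∏ j, b j = 1 / (∏ j, α j)^2 := by
    simp only [hb_def]
    rw [Finset.prod_div_distrib, Finset.prod_const, ← Finset.prod_pow]
    simp
  have hsq : ((k:ℝ)/n)^k ≤ (∏ j, α j)^2 := by
    have h1 : ((n:ℝ)/k)^k = 1 / (((k:ℝ)/n)^k) := by
      rw [one_div, ← inv_pow, inv_div]
    rw [hprodb, h1] at hineq
    have hkn0 : (0:ℝ) < ((k:ℝ)/n)^k := by positivity
    exact le_of_one_div_le_one_div (by positivity) hineq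
  have hsq2 : (Real.sqrt ((k:ℝ)/n) ^ k)^2 = ((k:ℝ)/n)^k := by
    rw [← pow_mul, mul_comm k 2, pow_mul, Real.sq_sqrt (by positivity)]
  have hmain1 : Real.sqrt ((k:ℝ)/n) ^ k ≤ ∏ j, α j := by
    have h1 : Real.sqrt ((k:ℝ)/n) ^ k = Real.sqrt ((Real.sqrt ((k:ℝ)/n) ^ k)^2) := by
      rw [Real.sqrt_sq (by positivity)]
    rw [h1, hsq2]
    calc Real.sqrt (((k:ℝ)/n)^k) ≤ Real.sqrt ((∏ j, α j)^2) := Real.sqrt_le_sqrt hsq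
      _ = ∏ j, α j := Real.sqrt_sq hP.le
  refine ⟨hmain1, ?_, ?_⟩
  · -- equality implies
    intro heq
    have hprodeq : ∏ j, b j = ((n:ℝ)/k)^k := by
      rw [hprodb, heq, hsq2]
      rw [one_div, ← inv_pow, inv_div]
    obtain ⟨hballeq, hbsumeq⟩ := heqc hprodeq
    have hsumn : ∑ j, b j = (n:ℝ) := by
      rw [hbsumeq]; field_simp
    have hdzero : ∀ j, d j = 0 := by
      have h0 : ∑ j, (d j)^2 / (α j)^2 ≤ 0 := by
        rw [hsumn] at hsplit; nlinarith
      intro j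
      have hz : ∑ j, (d j)^2 / (α j)^2 = 0 := le_antisymm h0 hd2
      have hdj := (Finset.sum_eq_zero_iff_of_nonneg (fun j _ => by positivity)).mp hz j
        (Finset.mem_univ j)
      have h2 : (d j)^2 = 0 := by
        rwa [div_eq_zero_iff, or_iff_left (pow_ne_zero 2 (hα j).ne')] at hdj
      exact pow_eq_zero_iff (two_ne_zero) |>.mp h2
    have hczero : c = 0 := by
      obtain ⟨f, hf⟩ := (Submodule.mem_span_range_iff_exists_fun ℝ).mp hc
      have hfj : ∀ j, f j = 0 := by
        intro j
        have := hdzero j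
        rw [hd_def] at this
        simp only at this
        rw [← hf, hv.inner_right_fintype] at this
        exact this
      rw [← hf]
      simp [hfj]
    refine ⟨hczero, fun j => ?_⟩
    have hbj : (1:ℝ)/(α j)^2 = (n:ℝ)/(k:ℝ) := hballeq j
    rw [div_eq_div_iff (pow_ne_zero 2 (hα j).ne') hk0.ne'] at hbj
    have hαj : (α j)^2 = (k:ℝ)/n := by
      rw [eq_div_iff hn0.ne']
      linear_combination -hbj
    calc α j = Real.sqrt ((α j)^2) := (Real.sqrt_sq (hα j).le).symm
      _ = Real.sqrt ((k:ℝ)/n) := by rw [hαj]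
  · -- converse
    rintro ⟨-, hαe⟩
    rw [Finset.prod_congr rfl fun j _ => hαe j]
    simp
    rw [div_pow]
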